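/- For even k = 2ℓ with ℓ ≥ 1 and r > k, the second derivative at 0 of A_{r,k}^2(x) = Q_{r-k-1}(x)^2 (1-x^2)/(2(2r-2k-1)) - Σ_{n=r-k}^{r-1} Q_n^{(n+k-r)}(x)^2 (n+1/2) is strictly negative; more precisely, it equals -(2ℓ)!(2ℓ+2)!(r-ℓ) / (2^{2r-1} ℓ!(ℓ+1)!(r-ℓ)!(r-ℓ-1)!). -/

import Mathlib

open Polynomial

noncomputable def Q (n : ℕ) : ℝ → ℝ := fun x => (1 - x^2)^n / (2^n * n.factorial)

noncomputable def qp (n : ℕ) : ℝ[X] := C ((2^n * (n.factorial : ℝ))⁻¹) * (1 - X^2)^n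

lemma Q_eq (n : ℕ) : Q n = fun x => (qp n).eval x := by
  funext x
  simp [Q, qp, div_eq_inv_mul, mul_comm]

lemma iteratedDeriv_eval (m : ℕ) (p : ℝ[X]) :
    iteratedDeriv m (fun x => p.eval x) = fun x => (derivative^[m] p).eval x := by
  induction m generalizing p with
  | zero => simp
  | succ m ih =>
      rw [iteratedDeriv_succ']
      have : deriv (fun x => p.eval x) = fun x => (derivative p).eval x := by
        funext x; exact p.deriv
      rw [this, ih, Function.iterate_succ_apply]

noncomputable def qc (n d : ℕ) : ℝ :=
  (if Even d then (-1)^(d/2) * (n.choose (d/2) : ℝ) else 0) * (2^n * (n.factorial : ℝ))⁻¹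

lemma coeff_one_sub_X_sq_pow (n d : ℕ) :
    ((1 - X^2 : ℝ[X])^n).coeff d =
      if Even d then (-1)^(d/2) * (n.choose (d/2) : ℝ) else 0 := by
  have h : (1 - X^2 : ℝ[X])^n
      = ∑ i ∈ Finset.range (n+1), C ((-1:ℝ)^i * (n.choose i : ℝ)) * X^(2*i) := by
    have h0 : (1 - X^2 : ℝ[X])^n = ((-X^2) + 1)^n := by ring
    rw [h0, add_pow]
    refine Finset.sum_congr rfl fun i _ => ?_
    rw [neg_pow, one_pow, mul_one, map_mul, map_pow, map_neg, map_one, ← pow_mul,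
      Polynomial.C_eq_natCast]
    ring
  rw [h, finset_sum_coeff]
  have hterm : ∀ i ∈ Finset.range (n+1),
      (C ((-1:ℝ)^i * (n.choose i : ℝ)) * X^(2*i)).coeff d
        = if d = 2*i then ((-1:ℝ)^i * (n.choose i : ℝ)) else 0 := by
    intro i _
    rw [coeff_C_mul, coeff_X_pow]
    simp [eq_comm]
  rw [Finset.sum_congr rfl hterm]
  by_cases hd : Even d
  · rw [if_pos hd]
    obtain ⟨j, hj⟩ := hd
    have hd2 : d / 2 = j := by omega
    have hcong : ∀ i ∈ Finset.range (n+1),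
        (if d = 2*i then ((-1:ℝ)^i * (n.choose i : ℝ)) else 0)
          = if j = i then ((-1:ℝ)^i * (n.choose i : ℝ)) else 0 := by
      intro i _
      exact if_congr (by omega) rfl rfl
    rw [Finset.sum_congr rfl hcong, Finset.sum_ite_eq, hd2]
    by_cases hjn : j ∈ Finset.range (n+1)
    · rw [if_pos hjn]
    · rw [if_neg hjn]
      have : n < j := by simp [Finset.mem_range] at hjn; omega
      rw [Nat.choose_eq_zero_of_lt this]
      simp
  · rw [if_neg hd]
    have hz : ∀ i ∈ Finset.range (n+1),
        (if d = 2*i then ((-1:ℝ)^i * (n.choose i : ℝ)) else 0) = 0 := by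
      intro i _
      have : ¬ (d = 2*i) := by rintro rfl; exact hd ⟨i, by omega⟩
      simp [this]
    rw [Finset.sum_congr rfl hz]
    simp

lemma coeff_qp (n d : ℕ) : (qp n).coeff d = qc n d := by
  rw [qp, coeff_C_mul, coeff_one_sub_X_sq_pow, qc, mul_comm]

lemma coeff_iter_qp (n m j : ℕ) :
    (derivative^[m] (qp n)).coeff j = ((j+m).descFactorial m : ℝ) * qc n (j+m) := by
  rw [Polynomial.coeff_iterate_derivative, coeff_qp, nsmul_eq_mul]

lemma coeff_two_sq (p : ℝ[X]) :
    (p^2).coeff 2 = 2 * p.coeff 0 * p.coeff 2 + p.coeff 1 ^ 2 := by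
  rw [sq, coeff_mul, Finset.Nat.sum_antidiagonal_eq_sum_range_succ_mk]
  simp [Finset.sum_range_succ]
  ring

noncomputable def A2 (r k : ℕ) : ℝ → ℝ := fun x =>
  (Q (r-k-1) x)^2 * (1 - x^2) / (2 * (2*(r:ℝ) - 2*k - 1)) -
    ∑ n ∈ Finset.Icc (r-k) (r-1), (iteratedDeriv (n+k-r) (Q n) x)^2 * ((n:ℝ) + 1/2)

noncomputable def P2 (r k : ℕ) : ℝ[X] :=
  C ((2 * (2*(r:ℝ) - 2*k - 1))⁻¹) * ((qp (r-k-1))^2 * (1 - X^2)) -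
    ∑ n ∈ Finset.Icc (r-k) (r-1), C ((n:ℝ) + 1/2) * (derivative^[n+k-r] (qp n))^2

lemma A2_eq (r k : ℕ) : A2 r k = fun x => (P2 r k).eval x := by
  funext x
  simp only [A2, P2, Q_eq, iteratedDeriv_eval, eval_sub, eval_mul, eval_C, eval_finset_sum,
    eval_pow, eval_one, eval_X]
  rw [div_eq_inv_mul]
  have hs : ∑ n ∈ Finset.Icc (r-k) (r-1),
        (eval x ((⇑derivative)^[n + k - r] (qp n)))^2 * ((n:ℝ) + 1/2)
      = ∑ n ∈ Finset.Icc (r-k) (r-1),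
        ((n:ℝ) + 1/2) * (eval x ((⇑derivative)^[n + k - r] (qp n)))^2 :=
    Finset.sum_congr rfl fun n _ => mul_comm _ _
  rw [hs]

lemma secondDeriv_A2 (r k : ℕ) : iteratedDeriv 2 (A2 r k) 0 = 2 * (P2 r k).coeff 2 := by
  rw [A2_eq, iteratedDeriv_eval]
  show Polynomial.eval 0 ((⇑derivative)^[2] (P2 r k)) = 2 * (P2 r k).coeff 2
  rw [← Polynomial.coeff_zero_eq_eval_zero, Polynomial.coeff_iterate_derivative]
  norm_num [Nat.descFactorial]

lemma coeff2_P2 (r k : ℕ) : (P2 r k).coeff 2 =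
    (2 * (2*(r:ℝ) - 2*k - 1))⁻¹ *
      (2 * qc (r-k-1) 0 * qc (r-k-1) 2 + qc (r-k-1) 1 ^ 2 - qc (r-k-1) 0 ^ 2) -
    ∑ n ∈ Finset.Icc (r-k) (r-1), ((n:ℝ) + 1/2) *
      (2 * (((n+k-r).descFactorial (n+k-r) : ℝ) * qc n (n+k-r))
          * (((2+(n+k-r)).descFactorial (n+k-r) : ℝ) * qc n (2+(n+k-r)))
        + (((1+(n+k-r)).descFactorial (n+k-r) : ℝ) * qc n (1+(n+k-r))) ^ 2) := by
  rw [P2, coeff_sub, coeff_C_mul, finset_sum_coeff]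
  have h1 : ((qp (r-k-1))^2 * (1 - X^2)).coeff 2
      = (2 * qc (r-k-1) 0 * qc (r-k-1) 2 + qc (r-k-1) 1 ^ 2 - qc (r-k-1) 0 ^ 2) := by
    have : (qp (r-k-1))^2 * (1 - X^2) = (qp (r-k-1))^2 - (qp (r-k-1))^2 * X^2 := by ring
    rw [this, coeff_sub, coeff_two_sq, Polynomial.coeff_mul_X_pow',
      if_pos (by norm_num : (2:ℕ) ≤ 2), show (2:ℕ) - 2 = 0 by norm_num, sq (qp (r-k-1)),
      Polynomial.mul_coeff_zero, coeff_qp, coeff_qp, coeff_qp, sq]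
    ring
  rw [h1]
  congr 1
  refine Finset.sum_congr rfl fun n _ => ?_
  rw [coeff_C_mul, coeff_two_sq, coeff_iter_qp, coeff_iter_qp, coeff_iter_qp]
  rw [show (0:ℕ) + (n+k-r) = n+k-r by omega]

lemma qc_even (n a : ℕ) :
    qc n (2*a) = (-1)^a * (n.choose a : ℝ) * (2^n * (n.factorial : ℝ))⁻¹ := by
  have h : Even (2*a) := ⟨a, by ring⟩
  have h2 : 2*a/2 = a := by omega
  rw [qc, if_pos h, h2]

lemma qc_odd (n a : ℕ) : qc n (2*a+1) = 0 := by
  have h : ¬ Even (2*a+1) := by simp [Nat.even_add_one, Nat.even_iff]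
  rw [qc, if_neg h, zero_mul]

noncomputable def FT (t n : ℕ) : ℝ := (2*(n:ℝ)+1) *
      (2 * (((n-(t+1)).descFactorial (n-(t+1)) : ℝ) * qc n (n-(t+1)))
          * (((2+(n-(t+1))).descFactorial (n-(t+1)) : ℝ) * qc n (2+(n-(t+1))))
        + (((1+(n-(t+1))).descFactorial (n-(t+1)) : ℝ) * qc n (1+(n-(t+1)))) ^ 2)

noncomputable def G (t a : ℕ) : ℝ :=
  -2*(((2*a).factorial : ℝ) * ((2*a+2).factorial : ℝ) * ((t:ℝ)+1+a)) /
    (4^(t+1+2*a) * (a.factorial : ℝ) * ((a+1).factorial : ℝ) *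
      ((t+1+a).factorial : ℝ) * ((t+a).factorial : ℝ))

lemma base (t : ℕ) :
    2 * ((2*(2*(t:ℝ)+1))⁻¹ * (2 * qc t 0 * qc t 2 + qc t 1 ^ 2 - qc t 0 ^ 2)) = G t 0 := by
  have h0 : qc t 0 = (2^t * (t.factorial : ℝ))⁻¹ := by
    have := qc_even t 0; simpa using this
  have h2 : qc t 2 = -(t:ℝ) * (2^t * (t.factorial : ℝ))⁻¹ := by
    have := qc_even t 1
    rw [show 2*1 = 2 by norm_num] at this
    rw [this, Nat.choose_one_right]
    ring
  have h1 : qc t 1 = 0 := by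
    have := qc_odd t 0; simpa using this
  rw [h0, h1, h2, G]
  have ht : (t.factorial : ℝ) ≠ 0 := Nat.cast_ne_zero.2 t.factorial_ne_zero
  have ht2 : (0:ℝ) < 2*(t:ℝ)+1 := by positivity
  have hp : ((2:ℝ)^t) ≠ 0 := by positivity
  have h4 : ((4:ℝ)^(t+1+2*0)) = 4 * ((2:ℝ)^t)^2 := by
    rw [show t+1+2*0 = t+1 by omega, pow_succ, show (4:ℝ) = 2^2 by norm_num,
      ← pow_mul, mul_comm 2 t, pow_mul]
    ring
  rw [h4]
  simp only [Nat.factorial, Nat.mul_eq, Nat.cast_ofNat, mul_zero, Nat.cast_zero]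
  norm_num [Nat.factorial_succ]
  field_simp
  ring

set_option maxHeartbeats 2000000 in
lemma step (t a : ℕ) : G t a - (FT t (t+1+2*a) + FT t (t+2+2*a)) = G t (a+1) := by
  have e1 : t+1+2*a - (t+1) = 2*a := by omega
  have e2 : t+2+2*a - (t+1) = 2*a+1 := by omega
  rw [FT, FT, e1, e2]
  -- rewrite qc values
  rw [show 1+2*a = 2*a+1 by omega, qc_odd]
  rw [show 2+(2*a+1) = 2*(a+1)+1 by omega, qc_odd]
  rw [show 2+2*a = 2*(a+1) by omega, qc_even, qc_even]
  rw [show 1+(2*a+1) = 2*(a+1) by omega, qc_even]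
  -- descFactorial values
  have d1 : (((2*a).descFactorial (2*a)) : ℝ) = ((2*a).factorial : ℝ) := by
    rw [Nat.descFactorial_self]
  have d2 : (((2*(a+1)).descFactorial (2*a)) : ℝ) = ((2*a+2).factorial : ℝ) / 2 := by
    have h := Nat.factorial_mul_descFactorial (show 2*a ≤ 2*(a+1) by omega)
    rw [show 2*(a+1) - 2*a = 2 by omega] at h
    have h2 : (((2*(a+1)).descFactorial (2*a)) : ℝ) * 2 = (((2*(a+1)).factorial : ℕ) : ℝ) := by
      rw [← h]; push_cast [Nat.factorial]; ring
    rw [eq_div_iff (two_ne_zero), h2, show 2*(a+1) = 2*a+2 by omega]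
  have d3 : (((2*(a+1)).descFactorial (2*a+1)) : ℝ) = ((2*a+2).factorial : ℝ) := by
    have h := Nat.factorial_mul_descFactorial (show 2*a+1 ≤ 2*(a+1) by omega)
    rw [show 2*(a+1) - (2*a+1) = 1 by omega, Nat.factorial_one, one_mul] at h
    rw [h, show 2*(a+1) = 2*a+2 by omega]
  rw [d1, d2, d3]
  -- choose values
  have c1 : (((t+1+2*a).choose a) : ℝ)
      = ((t+1+2*a).factorial : ℝ) / ((a.factorial : ℝ) * ((t+1+a).factorial : ℝ)) := by
    rw [Nat.cast_choose ℝ (show a ≤ t+1+2*a by omega), show t+1+2*a-a = t+1+a by omega]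
  have c2 : (((t+1+2*a).choose (a+1)) : ℝ)
      = ((t+1+2*a).factorial : ℝ) / (((a+1).factorial : ℝ) * ((t+a).factorial : ℝ)) := by
    rw [Nat.cast_choose ℝ (show a+1 ≤ t+1+2*a by omega), show t+1+2*a-(a+1) = t+a by omega]
  have c3 : (((t+2+2*a).choose (a+1)) : ℝ)
      = ((t+2+2*a).factorial : ℝ) / (((a+1).factorial : ℝ) * ((t+1+a).factorial : ℝ)) := by
    rw [Nat.cast_choose ℝ (show a+1 ≤ t+2+2*a by omega), show t+2+2*a-(a+1) = t+1+a by omega]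
  rw [c1, c2, c3, G, G]
  -- factorial successor expansions
  have f1 : ((2*a+2).factorial : ℝ) = (2*a+2)*(2*a+1)*((2*a).factorial : ℝ) := by
    rw [show 2*a+2 = (2*a+1)+1 by omega, Nat.factorial_succ, Nat.factorial_succ]
    push_cast; ring
  have f2 : ((2*(a+1)).factorial : ℝ) = (2*a+2)*(2*a+1)*((2*a).factorial : ℝ) := by
    rw [show 2*(a+1) = (2*a+1)+1 by omega, Nat.factorial_succ, Nat.factorial_succ]
    push_cast; ring
  have f3 : ((2*(a+1)+2).factorial : ℝ)
      = (2*a+4)*(2*a+3)*(2*a+2)*(2*a+1)*((2*a).factorial : ℝ) := by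
    rw [show 2*(a+1)+2 = (2*a+3)+1 by omega, Nat.factorial_succ,
      show 2*a+3 = (2*a+2)+1 by omega, Nat.factorial_succ,
      show 2*a+2 = (2*a+1)+1 by omega, Nat.factorial_succ, Nat.factorial_succ]
    push_cast; ring
  have f4 : (((a+1)+1).factorial : ℝ) = (a+2)*(a+1)*(a.factorial : ℝ) := by
    rw [Nat.factorial_succ, Nat.factorial_succ]; push_cast; ring
  have f5 : ((a+1).factorial : ℝ) = (a+1)*(a.factorial : ℝ) := by
    rw [Nat.factorial_succ]; push_cast; ring
  have f6 : ((t+1+(a+1)).factorial : ℝ) = (t+2+a)*(t+1+a)*((t+a).factorial : ℝ) := by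
    rw [show t+1+(a+1) = (t+1+a)+1 by omega, Nat.factorial_succ,
      show t+1+a = (t+a)+1 by omega, Nat.factorial_succ]
    push_cast; ring
  have f7 : ((t+(a+1)).factorial : ℝ) = (t+1+a)*((t+a).factorial : ℝ) := by
    rw [show t+(a+1) = (t+a)+1 by omega, Nat.factorial_succ]; push_cast; ring
  have f8 : ((t+1+a).factorial : ℝ) = (t+1+a)*((t+a).factorial : ℝ) := by
    rw [show t+1+a = (t+a)+1 by omega, Nat.factorial_succ]; push_cast; ring
  have f9 : ((t+2+2*a).factorial : ℝ) = (t+2+2*a)*((t+1+2*a).factorial : ℝ) := by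
    rw [show t+2+2*a = (t+1+2*a)+1 by omega, Nat.factorial_succ]; push_cast; ring
  -- power expansions
  have p1 : ((4:ℝ)^(t+1+2*a)) = ((2:ℝ)^(t+1+2*a))^2 := by
    rw [show (4:ℝ) = 2^2 by norm_num, ← pow_mul, ← pow_mul, mul_comm]
  have p2 : ((4:ℝ)^(t+1+2*(a+1))) = 16*((2:ℝ)^(t+1+2*a))^2 := by
    rw [show t+1+2*(a+1) = (t+1+2*a)+2 by omega, pow_add, p1]; ring
  have p3 : ((2:ℝ)^(t+2+2*a)) = 2*((2:ℝ)^(t+1+2*a)) := by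
    rw [show t+2+2*a = (t+1+2*a)+1 by omega, pow_succ]; ring
  rw [f1, f2, f3, f4, f5, f6, f7, f8, f9, p1, p2, p3]
  -- nonzero facts
  have n1 : ((2*a).factorial : ℝ) ≠ 0 := Nat.cast_ne_zero.2 (Nat.factorial_ne_zero _)
  have n2 : (a.factorial : ℝ) ≠ 0 := Nat.cast_ne_zero.2 (Nat.factorial_ne_zero _)
  have n3 : ((t+a).factorial : ℝ) ≠ 0 := Nat.cast_ne_zero.2 (Nat.factorial_ne_zero _)
  have n4 : ((t+1+2*a).factorial : ℝ) ≠ 0 := Nat.cast_ne_zero.2 (Nat.factorial_ne_zero _)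
  have n5 : ((2:ℝ)^(t+1+2*a)) ≠ 0 := by positivity
  have n6 : ((t:ℝ)+1+a) ≠ 0 := by positivity
  have n7 : ((t:ℝ)+2+a) ≠ 0 := by positivity
  have n8 : ((a:ℝ)+1) ≠ 0 := by positivity
  have hodd : ((-1:ℝ))^(a+1) = -(-1)^a := by rw [pow_succ]; ring
  rw [hodd]
  rcases Nat.even_or_odd a with h | h
  · rw [h.neg_one_pow]
    field_simp
    push_cast
    ring
  · rw [h.neg_one_pow]
    field_simp
    push_cast
    ring

lemma sum_pairs (t : ℕ) (f : ℕ → ℝ) (L : ℕ) :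
    ∑ n ∈ Finset.Icc (t+1) (t+2*L), f n
      = ∑ a ∈ Finset.range L, (f (t+1+2*a) + f (t+2+2*a)) := by
  induction L with
  | zero => simp
  | succ L ih =>
      rw [show t+2*(L+1) = (t+2*L+1)+1 by omega,
        Finset.sum_Icc_succ_top (by omega : t+1 ≤ t+2*L+1+1),
        Finset.sum_Icc_succ_top (by omega : t+1 ≤ t+2*L+1), ih,
        Finset.sum_range_succ,
        show t+2*L+1 = t+1+2*L by omega, show t+1+2*L+1 = t+2+2*L by omega]
      ring

lemma tele (t L : ℕ) :
    ∑ a ∈ Finset.range L, (FT t (t+1+2*a) + FT t (t+2+2*a)) = G t 0 - G t L := by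
  induction L with
  | zero => simp
  | succ L ih =>
      rw [Finset.sum_range_succ, ih]
      have := step t L
      linarith

theorem stmt4 (r ℓ : ℕ) (hℓ : 1 ≤ ℓ) (hrk : 2*ℓ < r) :
    iteratedDeriv 2 (A2 r (2*ℓ)) 0 =
      -(((2*ℓ).factorial : ℝ) * ((2*ℓ+2).factorial : ℝ) * ((r:ℝ) - ℓ)) /
        (2^(2*r-1) * (ℓ.factorial : ℝ) * ((ℓ+1).factorial : ℝ) *
          ((r-ℓ).factorial : ℝ) * ((r-ℓ-1).factorial : ℝ)) ∧
    iteratedDeriv 2 (A2 r (2*ℓ)) 0 < 0 := by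
  obtain ⟨t, rfl⟩ : ∃ t, r = t+1+2*ℓ := ⟨r-2*ℓ-1, by omega⟩
  have hmain : iteratedDeriv 2 (A2 (t+1+2*ℓ) (2*ℓ)) 0 = G t ℓ := by
    rw [secondDeriv_A2, coeff2_P2]
    rw [show t+1+2*ℓ-(2*ℓ)-1 = t by omega, show t+1+2*ℓ-2*ℓ = t+1 by omega,
      show t+1+2*ℓ-1 = t+2*ℓ by omega]
    have hsum : ∑ n ∈ Finset.Icc (t+1) (t+2*ℓ), ((n:ℝ) + 1/2) *
        (2 * (((n+2*ℓ-(t+1+2*ℓ)).descFactorial (n+2*ℓ-(t+1+2*ℓ)) : ℝ) * qc n (n+2*ℓ-(t+1+2*ℓ)))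
            * (((2+(n+2*ℓ-(t+1+2*ℓ))).descFactorial (n+2*ℓ-(t+1+2*ℓ)) : ℝ)
                * qc n (2+(n+2*ℓ-(t+1+2*ℓ))))
          + (((1+(n+2*ℓ-(t+1+2*ℓ))).descFactorial (n+2*ℓ-(t+1+2*ℓ)) : ℝ)
                * qc n (1+(n+2*ℓ-(t+1+2*ℓ)))) ^ 2)
        = (1/2) * ∑ n ∈ Finset.Icc (t+1) (t+2*ℓ), FT t n := by
      rw [Finset.mul_sum]
      refine Finset.sum_congr rfl fun n _ => ?_
      rw [FT, show n+2*ℓ-(t+1+2*ℓ) = n-(t+1) by omega]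
      ring
    rw [hsum, sum_pairs, tele]
    have hc : (2 * (2*((t+1+2*ℓ:ℕ):ℝ) - 2*((2*ℓ:ℕ):ℝ) - 1)) = 2*(2*(t:ℝ)+1) := by
      push_cast; ring
    rw [hc]
    have hb := base t
    linarith
  have hval : G t ℓ =
      -(((2*ℓ).factorial : ℝ) * ((2*ℓ+2).factorial : ℝ) * (((t+1+2*ℓ:ℕ):ℝ) - ℓ)) /
        (2^(2*(t+1+2*ℓ)-1) * (ℓ.factorial : ℝ) * ((ℓ+1).factorial : ℝ) *
          (((t+1+2*ℓ)-ℓ).factorial : ℝ) * (((t+1+2*ℓ)-ℓ-1).factorial : ℝ)) := by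
    rw [G, show (t+1+2*ℓ)-ℓ = t+1+ℓ by omega, show t+1+ℓ-1 = t+ℓ by omega,
      show 2*(t+1+2*ℓ)-1 = 2*t+1+4*ℓ by omega]
    have hp : ((4:ℝ))^(t+1+2*ℓ) = 2*(2:ℝ)^(2*t+1+4*ℓ) := by
      rw [show (4:ℝ) = 2^2 by norm_num, ← pow_mul,
        show 2*(t+1+2*ℓ) = (2*t+1+4*ℓ)+1 by omega, pow_succ]
      ring
    rw [hp]
    push_cast
    ring
  refine ⟨hmain.trans hval, ?_⟩
  rw [hmain, G]
  apply div_neg_of_neg_of_pos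
  · have h1 : (0:ℝ) < ((2*ℓ).factorial : ℝ) * ((2*ℓ+2).factorial : ℝ) * ((t:ℝ)+1+ℓ) := by
      positivity
    linarith
  · positivity
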